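/- Let 0 ≤ n ≤ 1 and 0 ≤ θ ≤ π/2 with n sinθ < 1, and set θ_o = arccos(n cosθ) and θ₃ = arccos √(1 − n² sin²θ). Then for every function f : ℝ² → ℝ that is symmetric and concave on the probability simplex Ω₂, the average coherences of the qubit decompositions D^(m₁), D^(s), D^(M) satisfy the measure-independent order relation f(cos²(θ₃/2), sin²(θ₃/2)) ≤ f(cos²(θ/2), sin²(θ/2)) ≤ f(cos²(θ_o/2), sin²(θ_o/2)), i.e. C̄(D^(m₁)) ≤ C̄(D^(s)) ≤ C̄(D^(M)). (Order relation (8).) -/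

import Mathlib

noncomputable section

/-- A symmetric function: invariant under all coordinate permutations. -/
def SymmetricFn {n : ℕ} (f : (Fin n → ℝ) → ℝ) : Prop :=
  ∀ (σ : Equiv.Perm (Fin n)) (x : Fin n → ℝ), f (x ∘ σ) = f x

lemma mem_simplex2 {b : ℝ} (h0 : 0 ≤ b) (h1 : b ≤ 1) :
    ![b, 1 - b] ∈ stdSimplex ℝ (Fin 2) := by
  constructor
  · intro i; fin_cases i <;> simp <;> linarith
  · simp [Fin.sum_univ_two]

lemma key_mono (f : (Fin 2 → ℝ) → ℝ) (hsym : SymmetricFn f)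
    (hconc : ConcaveOn ℝ (stdSimplex ℝ (Fin 2)) f) {a b : ℝ}
    (ha : 1 / 2 ≤ a) (hab : a ≤ b) (hb : b ≤ 1) :
    f ![b, 1 - b] ≤ f ![a, 1 - a] := by
  have hb2 : (1 : ℝ) / 2 ≤ b := le_trans ha hab
  rcases eq_or_lt_of_le hb2 with h | h
  · have : a = b := le_antisymm hab (by linarith)
    rw [this]
  · -- b > 1/2
    have hden : 2 * b - 1 ≠ 0 := ne_of_gt (by linarith)
    set t : ℝ := (a + b - 1) / (2 * b - 1) with ht
    have ht0 : 0 ≤ t := by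
      apply div_nonneg <;> linarith
    have ht1 : t ≤ 1 := by
      rw [div_le_one (by linarith)]; linarith
    have hswap : f ![1 - b, b] = f ![b, 1 - b] := by
      have h2 := hsym (Equiv.swap 0 1) ![b, 1 - b]
      have heq : (![b, 1 - b] ∘ (Equiv.swap 0 1) : Fin 2 → ℝ) = ![1 - b, b] := by
        funext i; fin_cases i <;> simp
      rw [heq] at h2; exact h2
    have mem1 := mem_simplex2 (by linarith : (0:ℝ) ≤ b) hb
    have mem2 : ![1 - b, b] ∈ stdSimplex ℝ (Fin 2) := by
      constructor
      · intro i; fin_cases i <;> simp <;> linarith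
      · simp [Fin.sum_univ_two]
    have hcomb : t • ![b, 1 - b] + (1 - t) • ![1 - b, b] = ![a, 1 - a] := by
      have h1 : t * b + (1 - t) * (1 - b) = a := by
        field_simp [ht]
        have h' : t * (2 * b - 1) = a + b - 1 := by rw [ht]; exact div_mul_cancel₀ _ hden
        linear_combination h'
      funext i; fin_cases i <;>
        simp [Pi.add_apply, Pi.smul_apply, smul_eq_mul] <;> linarith
    have h3 := hconc.2 mem1 mem2 ht0 (by linarith : 0 ≤ 1 - t) (by ring)
    rw [hcomb] at h3
    simp only [smul_eq_mul, hswap] at h3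
    calc f ![b, 1 - b] = t * f ![b, 1 - b] + (1 - t) * f ![b, 1 - b] := by ring
      _ ≤ f ![a, 1 - a] := h3

/-- Order relation (8): for every symmetric concave `f` on the probability simplex,
the average coherences of the qubit decompositions `D^(m₁)`, `D^(s)`, `D^(M)`
satisfy `C̄(D^(m₁)) ≤ C̄(D^(s)) ≤ C̄(D^(M))`, where `θ_o = arccos(n cos θ)` and
`θ₃ = arccos √(1 − n² sin²θ)`. -/
theorem order_relation_Dm1_Ds_DM (n θ : ℝ)
    (hn0 : 0 ≤ n) (hn1 : n ≤ 1) (hθ0 : 0 ≤ θ) (hθ1 : θ ≤ Real.pi / 2)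
    (hns : n * Real.sin θ < 1)
    (f : (Fin 2 → ℝ) → ℝ) (hsym : SymmetricFn f)
    (hconc : ConcaveOn ℝ (stdSimplex ℝ (Fin 2)) f) :
    let θo := Real.arccos (n * Real.cos θ)
    let θ₃ := Real.arccos (Real.sqrt (1 - n ^ 2 * Real.sin θ ^ 2))
    f ![Real.cos (θ₃ / 2) ^ 2, Real.sin (θ₃ / 2) ^ 2] ≤
        f ![Real.cos (θ / 2) ^ 2, Real.sin (θ / 2) ^ 2] ∧
      f ![Real.cos (θ / 2) ^ 2, Real.sin (θ / 2) ^ 2] ≤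
        f ![Real.cos (θo / 2) ^ 2, Real.sin (θo / 2) ^ 2] := by
  intro θo θ₃
  have hcosθ : 0 ≤ Real.cos θ := Real.cos_nonneg_of_mem_Icc ⟨by linarith [Real.pi_pos], hθ1⟩
  have hcosθ1 : Real.cos θ ≤ 1 := Real.cos_le_one θ
  have hsinθ0 : 0 ≤ Real.sin θ := Real.sin_nonneg_of_nonneg_of_le_pi hθ0
    (by linarith [Real.pi_pos])
  have hsin1 : Real.sin θ ≤ 1 := Real.sin_le_one θ
  have hx0 : 0 ≤ n * Real.sin θ := mul_nonneg hn0 hsinθ0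
  have hn2 : n ^ 2 * Real.sin θ ^ 2 ≤ 1 := by nlinarith [sq_nonneg (n * Real.sin θ)]
  have hsq0 : 0 ≤ Real.sqrt (1 - n ^ 2 * Real.sin θ ^ 2) := Real.sqrt_nonneg _
  have hsq1 : Real.sqrt (1 - n ^ 2 * Real.sin θ ^ 2) ≤ 1 := by
    exact (Real.sqrt_le_sqrt (by nlinarith [sq_nonneg (n * Real.sin θ)])).trans_eq Real.sqrt_one
  have hcosθ₃ : Real.cos θ₃ = Real.sqrt (1 - n ^ 2 * Real.sin θ ^ 2) :=
    Real.cos_arccos (by linarith) hsq1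
  have hcosθo : Real.cos θo = n * Real.cos θ :=
    Real.cos_arccos (by nlinarith) (by nlinarith)
  have h1 : Real.cos θ ≤ Real.cos θ₃ := by
    rw [hcosθ₃, show Real.cos θ = Real.sqrt (Real.cos θ ^ 2) from (Real.sqrt_sq hcosθ).symm]
    apply Real.sqrt_le_sqrt
    have hnn : n ^ 2 ≤ 1 := by nlinarith
    have := mul_le_of_le_one_left (sq_nonneg (Real.sin θ)) hnn
    nlinarith [Real.sin_sq_add_cos_sq θ]
  have h2 : Real.cos θo ≤ Real.cos θ := by rw [hcosθo]; nlinarith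
  have h3 : 0 ≤ Real.cos θo := by rw [hcosθo]; positivity
  have e1 : Real.cos (θ₃ / 2) ^ 2 = 1 / 2 + Real.cos θ₃ / 2 := by
    rw [Real.cos_sq]; ring_nf
  have e2 : Real.cos (θ / 2) ^ 2 = 1 / 2 + Real.cos θ / 2 := by
    rw [Real.cos_sq]; ring_nf
  have e3 : Real.cos (θo / 2) ^ 2 = 1 / 2 + Real.cos θo / 2 := by
    rw [Real.cos_sq]; ring_nf
  rw [Real.sin_sq, Real.sin_sq, Real.sin_sq]
  constructor
  · apply key_mono f hsym hconc
    · rw [e2]; linarith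
    · rw [e2, e1]; linarith
    · rw [e1, hcosθ₃]; linarith
  · apply key_mono f hsym hconc
    · rw [e3]; linarith
    · rw [e3, e2]; linarith
    · rw [e2]; linarith
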